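/- Let $\vec{n}_1$ and $\vec{n}_2$ be dimension vectors such that $\vec{n}_2$ is a sub-vector of (some permutation of) $\vec{n}_1$, with all entries positive and $\min$-entries equal where defined. Then for every $i \in \{1, \ldots, \min_j n_{2,j}\}$, $c_i(\vec{n}_1) \le c_i(\vec{n}_2)$, where $c_i(\vec{n}) = 1 - i + \min_{k=1,\ldots,N(\vec{n})} \lfloor (\sum_{l=0}^{k} \tilde{n}_l - i)/k \rfloor$ is computed from the ordered version $\tilde{n}$ of $\vec{n}$ and $N(\vec{n})+1$ is the length of $\vec{n}$. -/

import Mathlib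

/-- Monotonicity of the Rayleigh product channel DMT under sub-vectors:
if the ordered dimension vector `n₂ = n₁ ∘ φ` is a sub-vector of the ordered vector
`n₁` (selected by a strictly monotone index map `φ`), with positive entries and equal
minimum entries, then `c_i(n₁) ≤ c_i(n₂)` for all `1 ≤ i ≤ min n₂`. -/
theorem rp_dmt_subvector (N₁ N₂ : ℕ) (hN₁ : 1 ≤ N₁) (hN₂ : 1 ≤ N₂)
    (n₁ : ℕ → ℤ)
    (hpos : ∀ l, l ≤ N₁ → 0 < n₁ l)
    (hmono : ∀ l, l < N₁ → n₁ l ≤ n₁ (l + 1))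
    (φ : ℕ → ℕ) (hφ : StrictMono φ) (hφN : φ N₂ ≤ N₁)
    (hmin : n₁ 0 = n₁ (φ 0))
    (c₁ c₂ : ℤ → ℤ)
    (hc₁ : ∀ i : ℤ, c₁ i = 1 - i +
      (Finset.Icc 1 N₁).inf' (Finset.nonempty_Icc.mpr hN₁)
        (fun k => Int.fdiv ((∑ l ∈ Finset.range (k + 1), n₁ l) - i) (k : ℤ)))
    (hc₂ : ∀ i : ℤ, c₂ i = 1 - i +
      (Finset.Icc 1 N₂).inf' (Finset.nonempty_Icc.mpr hN₂)
        (fun k => Int.fdiv ((∑ l ∈ Finset.range (k + 1), n₁ (φ l)) - i) (k : ℤ))) :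
    ∀ i : ℤ, 1 ≤ i → i ≤ n₁ (φ 0) → c₁ i ≤ c₂ i := by
  -- monotonicity of n₁ on [0, N₁]
  have hmono' : ∀ a b : ℕ, a ≤ b → b ≤ N₁ → n₁ a ≤ n₁ b := by
    intro a b hab hb
    induction b with
    | zero => simp [Nat.le_zero.mp hab]
    | succ m ih =>
      rcases Nat.lt_or_ge a (m + 1) with h | h
      · exact le_trans (ih (by omega) (by omega)) (hmono m (by omega))
      · have : a = m + 1 := by omega
        simp [this]
  intro i hi hi2
  rw [hc₁ i, hc₂ i]
  apply add_le_add_right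
  apply Finset.le_inf'
  intro k hk
  simp only [Finset.mem_Icc] at hk
  have hkN₂ : k ≤ N₂ := hk.2
  have hkN₁ : k ≤ N₁ := le_trans hkN₂ (le_trans (hφ.le_apply) hφN)
  have hmem : k ∈ Finset.Icc 1 N₁ := Finset.mem_Icc.mpr ⟨hk.1, hkN₁⟩
  refine le_trans (Finset.inf'_le _ hmem) ?_
  have hsum : (∑ l ∈ Finset.range (k + 1), n₁ l) ≤ ∑ l ∈ Finset.range (k + 1), n₁ (φ l) := by
    apply Finset.sum_le_sum
    intro l hl
    simp only [Finset.mem_range] at hl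
    have hlk : l ≤ k := by omega
    have hφl : φ l ≤ N₁ := le_trans (hφ.monotone (le_trans hlk hkN₂)) hφN
    exact hmono' l (φ l) hφ.le_apply hφl
  have hkpos : (0 : ℤ) < (k : ℤ) := by exact_mod_cast hk.1
  rw [Int.fdiv_eq_ediv_of_nonneg _ hkpos.le, Int.fdiv_eq_ediv_of_nonneg _ hkpos.le]
  exact Int.ediv_le_ediv hkpos (by omega)
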